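/- For real numbers t < b, the integral (1/(2π)) ∫_t^b (x · 6x⁵)/√((b−x)(x−t)) dx equals 3(231b⁶ + 126b⁵t + 105b⁴t² + 100b³t³ + 105b²t⁴ + 126bt⁵ + 231t⁶)/1024. -/

import Mathlib

open Real MeasureTheory Set intervalIntegral

set_option maxHeartbeats 2000000

/-- Coulomb fluid integral for the sextic Freud weight (`v₀'(x) = 6x⁵`):
`(1/(2π)) ∫_t^b x·6x⁵/√((b-x)(x-t)) dx
  = 3(231b⁶ + 126b⁵t + 105b⁴t² + 100b³t³ + 105b²t⁴ + 126bt⁵ + 231t⁶)/1024`. -/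
theorem coulomb_integral_sextic (t b : ℝ) (htb : t < b) :
    (1 / (2 * π)) * ∫ x in t..b, (x * (6 * x ^ 5)) / Real.sqrt ((b - x) * (x - t))
      = 3 * (231 * b ^ 6 + 126 * b ^ 5 * t + 105 * b ^ 4 * t ^ 2
          + 100 * b ^ 3 * t ^ 3 + 105 * b ^ 2 * t ^ 4 + 126 * b * t ^ 5
          + 231 * t ^ 6) / 1024 := by
  have hr : (0:ℝ) < b - t := sub_pos.mpr htb
  set A : ℝ := (693*b^6 + 378*b^5*t + 315*b^4*t^2 + 300*b^3*t^3 + 315*b^2*t^4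
      + 378*b*t^5 + 693*t^6)/512 with hA
  set P : ℝ → ℝ := fun x => -(x^5) - 11/10*(b+t)*x^4 - (99*b^2+98*b*t+99*t^2)/80*x^3
      - (231*b^3+225*b^2*t+225*b*t^2+231*t^3)/160*x^2
      - (1155*b^4+1092*b^3*t+1074*b^2*t^2+1092*b*t^3+1155*t^4)/640*x
      - (3465*b^5+3045*b^4*t+2898*b^3*t^2+2898*b^2*t^3+3045*b*t^4+3465*t^5)/1280 with hPdef
  set P' : ℝ → ℝ := fun x => -(5*x^4) - 11/10*(b+t)*(4*x^3) - (99*b^2+98*b*t+99*t^2)/80*(3*x^2)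
      - (231*b^3+225*b^2*t+225*b*t^2+231*t^3)/160*(2*x)
      - (1155*b^4+1092*b^3*t+1074*b^2*t^2+1092*b*t^3+1155*t^4)/640 with hP'def
  set F : ℝ → ℝ := fun x => P x * Real.sqrt ((b-x)*(x-t))
      + A * Real.arcsin ((2*x-b-t)/(b-t)) with hFdef
  -- derivative of P
  have hPd : ∀ x : ℝ, HasDerivAt P (P' x) x := by
    intro x
    have h : HasDerivAt (fun x : ℝ => -(x^5) - 11/10*(b+t)*x^4 - (99*b^2+98*b*t+99*t^2)/80*x^3
        - (231*b^3+225*b^2*t+225*b*t^2+231*t^3)/160*x^2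
        - (1155*b^4+1092*b^3*t+1074*b^2*t^2+1092*b*t^3+1155*t^4)/640*x
        - (3465*b^5+3045*b^4*t+2898*b^3*t^2+2898*b^2*t^3+3045*b*t^4+3465*t^5)/1280)
        (-(((5:ℕ):ℝ)*x^4) - 11/10*(b+t)*(((4:ℕ):ℝ)*x^3)
        - (99*b^2+98*b*t+99*t^2)/80*(((3:ℕ):ℝ)*x^2)
        - (231*b^3+225*b^2*t+225*b*t^2+231*t^3)/160*(((2:ℕ):ℝ)*x^1)
        - (1155*b^4+1092*b^3*t+1074*b^2*t^2+1092*b*t^3+1155*t^4)/640*1) x :=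
      (((((hasDerivAt_pow 5 x).neg.sub
        ((hasDerivAt_pow 4 x).const_mul (11/10*(b+t)))).sub
        ((hasDerivAt_pow 3 x).const_mul ((99*b^2+98*b*t+99*t^2)/80))).sub
        ((hasDerivAt_pow 2 x).const_mul ((231*b^3+225*b^2*t+225*b*t^2+231*t^3)/160))).sub
        ((hasDerivAt_id x).const_mul
          ((1155*b^4+1092*b^3*t+1074*b^2*t^2+1092*b*t^3+1155*t^4)/640))).sub_const _
    rw [hPdef, hP'def]
    convert h using 1
    push_cast
    ring
  -- measurability of the integrand
  have hmeas : ∀ u v : ℝ, AEStronglyMeasurable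
      (fun x => (x * (6 * x ^ 5)) / Real.sqrt ((b - x) * (x - t)))
      (volume.restrict (uIoc u v)) := fun u v =>
    ((measurable_id.mul ((measurable_id.pow_const 5).const_mul 6)).div
      (Real.continuous_sqrt.measurable.comp
        (((continuous_const.sub continuous_id).mul
          (continuous_id.sub continuous_const)).measurable))).aestronglyMeasurable
  set m : ℝ := (t + b) / 2 with hm
  have hm1 : t < m := by rw [hm]; linarith
  have hm2 : m < b := by rw [hm]; linarith
  have hCs : (0:ℝ) < Real.sqrt ((b - t)/2) := Real.sqrt_pos.mpr (by linarith)
  set C : ℝ := 6 * (|t| + |b|)^6 / Real.sqrt ((b - t)/2) with hCdef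
  have hnum : ∀ x : ℝ, t ≤ x → x ≤ b → |x * (6 * x ^ 5)| ≤ 6 * (|t| + |b|)^6 := by
    intro x h1 h2
    have hx : |x| ≤ |t| + |b| := abs_le.mpr
      ⟨by have := neg_abs_le t; have := abs_nonneg b; linarith,
       by have := le_abs_self b; have := abs_nonneg t; linarith⟩
    have h0 : (0:ℝ) ≤ |x| := abs_nonneg x
    calc |x * (6 * x ^ 5)| = 6 * |x|^6 := by
          rw [abs_mul, abs_mul, abs_pow, abs_of_nonneg (by norm_num : (0:ℝ) ≤ 6)]; ring
      _ ≤ 6 * (|t| + |b|)^6 := by gcongr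
  -- integrability on [t, m]
  have hint1 : IntervalIntegrable
      (fun x => (x * (6 * x ^ 5)) / Real.sqrt ((b - x) * (x - t))) volume t m := by
    have hg : IntervalIntegrable (fun x => C * (x - t) ^ (-(1/2) : ℝ)) volume t m := by
      have h0 : IntervalIntegrable (fun x : ℝ => x ^ (-(1/2) : ℝ)) volume 0 (m - t) :=
        intervalIntegrable_rpow' (by norm_num)
      have h1 := (h0.comp_sub_right t).const_mul C
      simpa using h1
    refine hg.mono_fun' (hmeas t m) ?_
    rw [Filter.EventuallyLE, ae_restrict_iff' measurableSet_uIoc]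
    refine Filter.Eventually.of_forall (fun x hx => ?_)
    rw [uIoc_of_le hm1.le] at hx
    obtain ⟨hx1, hx2⟩ := hx
    have hxb : x ≤ b := by rw [hm] at hx2; linarith
    have hxt : (0:ℝ) < x - t := by linarith
    have hbx : (b - t)/2 ≤ b - x := by rw [hm] at hx2; linarith
    have hs1 : Real.sqrt ((b - t)/2) * Real.sqrt (x - t) ≤ Real.sqrt ((b - x) * (x - t)) := by
      rw [← Real.sqrt_mul (by linarith)]
      exact Real.sqrt_le_sqrt (by nlinarith)
    have hs0 : (0:ℝ) < Real.sqrt ((b - t)/2) * Real.sqrt (x - t) :=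
      mul_pos hCs (Real.sqrt_pos.mpr hxt)
    have hrp : (x - t) ^ (-(1/2) : ℝ) = 1 / Real.sqrt (x - t) := by
      rw [Real.rpow_neg hxt.le, Real.sqrt_eq_rpow]
      simp [one_div]
    calc ‖x * (6 * x ^ 5) / Real.sqrt ((b - x) * (x - t))‖
        = |x * (6 * x ^ 5)| / Real.sqrt ((b - x) * (x - t)) := by
          rw [Real.norm_eq_abs, abs_div, abs_of_nonneg (Real.sqrt_nonneg _)]
      _ ≤ (6 * (|t| + |b|)^6) / (Real.sqrt ((b - t)/2) * Real.sqrt (x - t)) :=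
          div_le_div₀ (by positivity) (hnum x hx1.le hxb) hs0 hs1
      _ = C * (x - t) ^ (-(1/2) : ℝ) := by
          rw [hrp, hCdef]; field_simp
  -- integrability on [m, b]
  have hint2 : IntervalIntegrable
      (fun x => (x * (6 * x ^ 5)) / Real.sqrt ((b - x) * (x - t))) volume m b := by
    have hg : IntervalIntegrable (fun x => C * (b - x) ^ (-(1/2) : ℝ)) volume m b := by
      have h0 : IntervalIntegrable (fun x : ℝ => x ^ (-(1/2) : ℝ)) volume 0 (b - m) :=
        intervalIntegrable_rpow' (by norm_num)
      have h1 := ((h0.comp_sub_left b).const_mul C).symm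
      simpa using h1
    refine hg.mono_fun' (hmeas m b) ?_
    rw [Filter.EventuallyLE, ae_restrict_iff' measurableSet_uIoc]
    refine Filter.Eventually.of_forall (fun x hx => ?_)
    rw [uIoc_of_le hm2.le] at hx
    obtain ⟨hx1, hx2⟩ := hx
    have hxt : t < x := by rw [hm] at hx1; linarith
    rcases eq_or_lt_of_le hx2 with heq | hxb
    · rw [heq]
      have h1 : Real.sqrt ((b - b) * (b - t)) = 0 := by simp
      have h2 : ((b : ℝ) - b) ^ (-(1/2) : ℝ) = 0 := by
        rw [sub_self]; exact Real.zero_rpow (by norm_num)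
      rw [h1, h2, div_zero, mul_zero, norm_zero]
    · have hxt2 : (b - t)/2 ≤ x - t := by rw [hm] at hx1; linarith
      have hbx : (0:ℝ) < b - x := by linarith
      have hs1 : Real.sqrt ((b - t)/2) * Real.sqrt (b - x) ≤ Real.sqrt ((b - x) * (x - t)) := by
        rw [← Real.sqrt_mul (by linarith)]
        exact Real.sqrt_le_sqrt (by nlinarith)
      have hs0 : (0:ℝ) < Real.sqrt ((b - t)/2) * Real.sqrt (b - x) :=
        mul_pos hCs (Real.sqrt_pos.mpr hbx)
      have hrp : (b - x) ^ (-(1/2) : ℝ) = 1 / Real.sqrt (b - x) := by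
        rw [Real.rpow_neg hbx.le, Real.sqrt_eq_rpow]
        simp [one_div]
      calc ‖x * (6 * x ^ 5) / Real.sqrt ((b - x) * (x - t))‖
          = |x * (6 * x ^ 5)| / Real.sqrt ((b - x) * (x - t)) := by
            rw [Real.norm_eq_abs, abs_div, abs_of_nonneg (Real.sqrt_nonneg _)]
        _ ≤ (6 * (|t| + |b|)^6) / (Real.sqrt ((b - t)/2) * Real.sqrt (b - x)) :=
            div_le_div₀ (by positivity) (hnum x hxt.le hx2) hs0 hs1
        _ = C * (b - x) ^ (-(1/2) : ℝ) := by
            rw [hrp, hCdef]; field_simp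
  have hint : IntervalIntegrable
      (fun x => (x * (6 * x ^ 5)) / Real.sqrt ((b - x) * (x - t))) volume t b :=
    hint1.trans hint2
  -- continuity of F on [t, b]
  have hcont : ContinuousOn F (Icc t b) := by
    rw [hFdef, hPdef]
    apply Continuous.continuousOn
    apply Continuous.add
    · exact (by fun_prop : Continuous fun x : ℝ => -(x^5) - 11/10*(b+t)*x^4
        - (99*b^2+98*b*t+99*t^2)/80*x^3 - (231*b^3+225*b^2*t+225*b*t^2+231*t^3)/160*x^2
        - (1155*b^4+1092*b^3*t+1074*b^2*t^2+1092*b*t^3+1155*t^4)/640*x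
        - (3465*b^5+3045*b^4*t+2898*b^3*t^2+2898*b^2*t^3+3045*b*t^4+3465*t^5)/1280).mul
        (Real.continuous_sqrt.comp
          ((continuous_const.sub continuous_id).mul (continuous_id.sub continuous_const)))
    · exact continuous_const.mul (Real.continuous_arcsin.comp
        ((((continuous_const.mul continuous_id).sub continuous_const).sub continuous_const).div_const _))
  -- derivative of F on (t, b)
  have hd : ∀ x ∈ Ioo t b,
      HasDerivAt F ((x * (6 * x ^ 5)) / Real.sqrt ((b - x) * (x - t))) x := by
    intro x hx
    obtain ⟨hx1, hx2⟩ := hx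
    have hq : (0:ℝ) < (b - x) * (x - t) := mul_pos (by linarith) (by linarith)
    have hs : (0:ℝ) < Real.sqrt ((b - x) * (x - t)) := Real.sqrt_pos.mpr hq
    have hs2 : Real.sqrt ((b - x) * (x - t)) ^ 2 = (b - x) * (x - t) := Real.sq_sqrt hq.le
    have hq' : HasDerivAt (fun y => (b - y) * (y - t)) (b + t - 2*x) x := by
      have h := ((hasDerivAt_const x b).sub (hasDerivAt_id x)).mul
        ((hasDerivAt_id x).sub (hasDerivAt_const x t))
      refine h.congr_deriv ?_
      simp
      ring
    have hsq : HasDerivAt (fun y => Real.sqrt ((b - y) * (y - t)))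
        ((b + t - 2*x) / (2 * Real.sqrt ((b - x) * (x - t)))) x := hq'.sqrt hq.ne'
    have hu : HasDerivAt (fun y => (2*y - b - t)/(b - t)) (2*1/(b - t)) x :=
      ((((hasDerivAt_id x).const_mul 2).sub_const b).sub_const t).div_const _
    have hu1 : -1 < (2*x - b - t)/(b - t) := by
      rw [lt_div_iff₀ hr]; linarith
    have hu2 : (2*x - b - t)/(b - t) < 1 := by
      rw [div_lt_iff₀ hr]; linarith
    have harc : HasDerivAt (fun y => Real.arcsin ((2*y - b - t)/(b - t)))
        (1 / Real.sqrt (1 - ((2*x - b - t)/(b - t))^2) * (2*1/(b - t))) x :=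
      HasDerivAt.comp (h₂ := Real.arcsin) x (Real.hasDerivAt_arcsin hu1.ne' hu2.ne) hu
    have h1u : Real.sqrt (1 - ((2*x - b - t)/(b - t))^2)
        = 2 * Real.sqrt ((b - x) * (x - t)) / (b - t) := by
      rw [show 1 - ((2*x - b - t)/(b - t))^2
          = (2 * Real.sqrt ((b - x) * (x - t)) / (b - t))^2 from ?_]
      · exact Real.sqrt_sq (by positivity)
      · have hh : (2 * Real.sqrt ((b - x) * (x - t)) / (b - t))^2
            = 4 * ((b - x) * (x - t)) / (b - t)^2 := by
          rw [div_pow, mul_pow, Real.sq_sqrt hq.le]; norm_num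
        rw [hh]
        field_simp
        ring
    rw [h1u] at harc
    have hF' : HasDerivAt F (P' x * Real.sqrt ((b - x) * (x - t))
        + P x * ((b + t - 2*x) / (2 * Real.sqrt ((b - x) * (x - t))))
        + A * (1 / (2 * Real.sqrt ((b - x) * (x - t)) / (b - t)) * (2*1/(b - t)))) x := by
      rw [hFdef]
      exact ((hPd x).mul hsq).add (harc.const_mul A)
    have heq : P' x * Real.sqrt ((b - x) * (x - t))
        + P x * ((b + t - 2*x) / (2 * Real.sqrt ((b - x) * (x - t))))
        + A * (1 / (2 * Real.sqrt ((b - x) * (x - t)) / (b - t)) * (2*1/(b - t)))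
        = (x * (6 * x ^ 5)) / Real.sqrt ((b - x) * (x - t)) := by
      rw [hP'def, hPdef, hA]
      generalize hgen : Real.sqrt ((b - x) * (x - t)) = s at hs hs2 ⊢
      have hsne : s ≠ 0 := hs.ne'
      have expand : ∀ c : ℝ, c * s = (c * s^2) / s := by
        intro c; field_simp
      rw [expand, hs2]
      field_simp
      ring
    exact heq ▸ hF'
  -- fundamental theorem of calculus
  have key : (∫ x in t..b, (x * (6 * x ^ 5)) / Real.sqrt ((b - x) * (x - t))) = F b - F t :=
    integral_eq_sub_of_hasDeriv_right_of_le htb.le hcont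
      (fun x hx => (hd x hx).hasDerivWithinAt) hint
  have hFb : F b = A * (π/2) := by
    rw [hFdef]
    simp only
    rw [show (b - b) * (b - t) = 0 by ring, Real.sqrt_zero, mul_zero, zero_add,
      show (2*b - b - t)/(b - t) = 1 by rw [div_eq_one_iff_eq hr.ne']; ring,
      Real.arcsin_one]
  have hFt : F t = A * (-(π/2)) := by
    rw [hFdef]
    simp only
    rw [show (b - t) * (t - t) = 0 by ring, Real.sqrt_zero, mul_zero, zero_add,
      show (2*t - b - t)/(b - t) = -1 by rw [div_eq_iff hr.ne']; ring,
      Real.arcsin_neg_one]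
  rw [key, hFb, hFt, hA]
  have hπ : (π:ℝ) ≠ 0 := Real.pi_ne_zero
  field_simp
  ring
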